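/- For every substitution ζ on the alphabet {1,…,d}, ∫_{𝕋^d} log‖𝓜_ζ(t)‖_F dm_d(t) ≤ (1/2)·log(Σ_{b,c} S_ζ(b,c)), i.e. the average of log of the Frobenius norm of 𝓜_ζ over the torus is at most half the logarithm of the sum of all entries of the substitution matrix S_ζ. -/

import Mathlib

open MeasureTheory

noncomputable section

/-- The spectral-cocycle matrix `𝓜_ζ(t)` of a substitution `ζ` on the alphabet `{1,…,d}`
(letters modelled as `Fin d`, a substitution as a map `Fin d → List (Fin d)`):
`(𝓜_ζ(t))_{b,c} = Σ_{j ≤ |ζ(b)|, u_j^b = c} exp(−2πi Σ_{k<j} t_{u_k^b})`. -/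
def specMat {d : ℕ} (ζ : Fin d → List (Fin d)) (t : Fin d → ℝ) :
    Matrix (Fin d) (Fin d) ℂ := fun b c =>
  ∑ j : Fin (ζ b).length,
    if (ζ b).get j = c then
      Complex.exp (-(2 * Real.pi * Complex.I) *
        ((((ζ b).take (j : ℕ)).map t).sum : ℝ))
    else 0

/-- The Frobenius norm of a complex matrix. -/
def frobNorm {d : ℕ} (M : Matrix (Fin d) (Fin d) ℂ) : ℝ :=
  Real.sqrt (∑ b, ∑ c, ‖M b c‖ ^ 2)

/-- The Haar probability measure of the torus `𝕋^d = ℝ^d/ℤ^d`, transported to the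
fundamental domain `(0,1]^d`: integrating a `ℤ^d`-periodic function on `ℝ^d` against it
is exactly integration over `𝕋^d` with respect to `m_d`. -/
def haarCube (d : ℕ) : Measure (Fin d → ℝ) :=
  Measure.pi fun _ => (volume : Measure ℝ).restrict (Set.Ioc (0 : ℝ) 1)

/-- The substitution matrix `S_ζ(i,j) =` number of occurrences of the letter `i`
in the word `ζ(j)` (here with real entries). -/
def subMat {d : ℕ} (ζ : Fin d → List (Fin d)) : Matrix (Fin d) (Fin d) ℝ :=
  fun i j => ((ζ j).count i : ℝ)

/-! ### Auxiliary material -/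

open Real

instance : IsProbabilityMeasure ((volume : Measure ℝ).restrict (Set.Ioc (0:ℝ) 1)) := by
  constructor; rw [Measure.restrict_apply_univ, Real.volume_Ioc]; norm_num

instance (d : ℕ) : IsProbabilityMeasure (haarCube d) := by
  unfold haarCube; infer_instance

theorem my_integral_pi {n : ℕ} (μ : Measure ℝ) [SigmaFinite μ] (f : Fin n → ℝ → ℂ) :
    ∫ x : Fin n → ℝ, ∏ i, f i (x i) ∂(Measure.pi fun _ => μ) = ∏ i, ∫ x, f i x ∂μ := by
  induction n with
  | zero =>
      simp only [Finset.univ_eq_empty, Finset.prod_empty, integral_const,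
        Measure.pi_empty_univ, measureReal_def, ENNReal.toReal_one, smul_eq_mul, mul_one, one_smul]
  | succ n n_ih =>
      calc
        _ = ∫ x : ℝ × (Fin n → ℝ),
            f 0 x.1 * ∏ i : Fin n, f (Fin.succ i) (x.2 i) ∂(μ.prod (Measure.pi fun _ => μ)) := by
          rw [← ((measurePreserving_piFinSuccAbove
            (fun _ : Fin (n+1) => μ) 0).symm).integral_comp']
          simp_rw [MeasurableEquiv.piFinSuccAbove_symm_apply, Fin.insertNthEquiv,
            Equiv.coe_fn_mk, Fin.insertNth_zero, Fin.prod_univ_succ, Fin.cons_zero,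
            Fin.cons_succ, cast_eq]
        _ = (∫ x, f 0 x ∂μ) * ∏ i : Fin n, ∫ (x : ℝ), f (Fin.succ i) x ∂μ := by
          rw [← n_ih, ← integral_prod_mul]
        _ = ∏ i, ∫ x, f i x ∂μ := by rw [Fin.prod_univ_succ]

lemma onedim (k : ℤ) :
    ∫ x : ℝ, Complex.exp ((-(2 * π * Complex.I) * (k : ℂ)) * (x : ℂ))
      ∂((volume : Measure ℝ).restrict (Set.Ioc 0 1)) = if k = 0 then 1 else 0 := by
  by_cases hk : k = 0
  · subst hk
    simp only [Int.cast_zero, mul_zero, zero_mul, Complex.exp_zero, if_pos rfl]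
    simp [Real.volume_Ioc]
  · rw [if_neg hk]
    have hc : (-(2 * (π:ℂ) * Complex.I) * (k : ℂ)) ≠ 0 := by
      apply mul_ne_zero
      · simp [Real.pi_ne_zero, Complex.I_ne_zero]
      · exact_mod_cast hk
    have : (∫ x : ℝ in Set.Ioc (0:ℝ) 1,
        Complex.exp ((-(2 * π * Complex.I) * (k : ℂ)) * (x : ℂ)))
        = ∫ x in (0:ℝ)..1, Complex.exp ((-(2 * π * Complex.I) * (k : ℂ)) * (x : ℂ)) := by
      rw [intervalIntegral.integral_of_le zero_le_one]
    rw [this, integral_exp_mul_complex hc]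
    have h1 : (-(2 * (π:ℂ) * Complex.I) * (k : ℂ)) * (1:ℝ) = (-k : ℤ) * (2 * π * Complex.I) := by
      push_cast; ring
    rw [h1, Complex.exp_int_mul_two_pi_mul_I]
    simp

/-- the character `t ↦ e^{-2πi⟨m,t⟩}` -/
def char {d : ℕ} (m : Fin d → ℤ) (t : Fin d → ℝ) : ℂ :=
  Complex.exp (-(2 * π * Complex.I) * ∑ a, (m a : ℂ) * (t a : ℂ))

lemma char_continuous {d : ℕ} (m : Fin d → ℤ) : Continuous (char m) := by
  apply Complex.continuous_exp.comp
  apply Continuous.mul continuous_const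
  exact continuous_finset_sum _ fun a _ =>
    Continuous.mul continuous_const (Complex.continuous_ofReal.comp (continuous_apply a))

lemma char_norm {d : ℕ} (m : Fin d → ℤ) (t : Fin d → ℝ) : ‖char m t‖ = 1 := by
  have h : (-(2 * (π:ℂ) * Complex.I) * ∑ a, (m a : ℂ) * (t a : ℂ))
      = ((-(2 * π * ∑ a, (m a : ℝ) * t a) : ℝ) : ℂ) * Complex.I := by
    push_cast; ring
  rw [char, h, Complex.norm_exp_ofReal_mul_I]

lemma char_conj {d : ℕ} (m : Fin d → ℤ) (t : Fin d → ℝ) :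
    (starRingEnd ℂ) (char m t) = char (-m) t := by
  rw [char, ← Complex.exp_conj]
  congr 1
  simp only [map_mul, map_sum, map_neg, Complex.conj_I, Complex.conj_ofReal, map_ofNat,
    map_intCast]
  rw [Finset.mul_sum, Finset.mul_sum]
  apply Finset.sum_congr rfl
  intro a _
  simp only [Pi.neg_apply]
  push_cast
  ring

lemma char_mul {d : ℕ} (m m' : Fin d → ℤ) (t : Fin d → ℝ) :
    char m t * char m' t = char (m + m') t := by
  rw [char, char, char, ← Complex.exp_add]
  congr 1
  rw [← mul_add, ← Finset.sum_add_distrib]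
  congr 1
  apply Finset.sum_congr rfl
  intro a _
  simp only [Pi.add_apply]
  push_cast
  ring

lemma char_integrable {d : ℕ} (m : Fin d → ℤ) : Integrable (char m) (haarCube d) :=
  (integrable_const (1:ℝ)).mono' (char_continuous m).aestronglyMeasurable
    (Filter.Eventually.of_forall fun t => by
      rw [char_norm])

lemma charInt {d : ℕ} (m : Fin d → ℤ) :
    ∫ t, char m t ∂(haarCube d) = if m = 0 then 1 else 0 := by
  have h1 : ∀ t : Fin d → ℝ,
      char m t
        = ∏ a, Complex.exp ((-(2 * π * Complex.I) * (m a : ℂ)) * ((t a : ℝ) : ℂ)) := by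
    intro t
    rw [char, ← Complex.exp_sum, Finset.mul_sum]
    congr 1; apply Finset.sum_congr rfl; intro a _; ring
  simp_rw [h1]
  rw [haarCube, my_integral_pi ((volume : Measure ℝ).restrict (Set.Ioc (0:ℝ) 1))
    (fun a (x : ℝ) => Complex.exp ((-(2 * π * Complex.I) * (m a : ℂ)) * (x : ℂ)))]
  simp_rw [onedim]
  by_cases hm : m = 0
  · subst hm; simp
  · rw [if_neg hm]
    obtain ⟨a, ha⟩ : ∃ a, m a ≠ 0 := by
      by_contra h; push_neg at h; exact hm (funext h)
    exact Finset.prod_eq_zero (Finset.mem_univ a) (if_neg ha)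

lemma listSum {d : ℕ} (l : List (Fin d)) (t : Fin d → ℝ) :
    (l.map t).sum = ∑ a, (l.count a : ℝ) * t a := by
  induction l with
  | nil => simp
  | cons b l ih =>
      simp only [List.map_cons, List.sum_cons, ih, List.count_cons]
      push_cast
      rw [Finset.sum_congr rfl (fun a _ => add_mul ((l.count a : ℝ)) _ (t a)),
        Finset.sum_add_distrib]
      simp [Finset.sum_ite_eq' Finset.univ b t]
      ring

lemma sumCount {d : ℕ} (l : List (Fin d)) : ∑ a, l.count a = l.length := by
  induction l with
  | nil => simp
  | cons b l ih =>
      simp only [List.count_cons, List.length_cons, Finset.sum_add_distrib, ih]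
      simp [Finset.sum_ite_eq' Finset.univ b]

lemma getIte {d : ℕ} (l : List (Fin d)) (c : Fin d) :
    ∑ j : Fin l.length, (if l.get j = c then (1:ℂ) else 0) = (l.count c : ℂ) := by
  induction l with
  | nil => simp
  | cons b l ih =>
      have : (∑ j : Fin (l.length + 1), if (b :: l).get j = c then (1:ℂ) else 0)
          = ∑ j : Fin (b :: l).length, if (b :: l).get j = c then (1:ℂ) else 0 := rfl
      rw [← this, Fin.sum_univ_succ]
      simp only [List.get_eq_getElem, Fin.val_succ, List.getElem_cons_succ,
        List.getElem_cons_zero, List.count_cons]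
      simp only [List.get_eq_getElem] at ih
      rw [ih]
      by_cases hb : b = c <;> simp [hb] <;> push_cast <;> ring

def mvec {d : ℕ} (w : List (Fin d)) (j : ℕ) : Fin d → ℤ := fun a => ((w.take j).count a : ℤ)

lemma mvec_inj {d : ℕ} (w : List (Fin d)) (j j' : Fin w.length)
    (h : mvec w j = mvec w j') : j = j' := by
  have hs : ∀ j : Fin w.length, ∑ a, ((w.take (j:ℕ)).count a) = (j:ℕ) := by
    intro j
    rw [sumCount, List.length_take]
    exact Nat.min_eq_left j.2.le
  have hc : ∀ a, (w.take (j:ℕ)).count a = (w.take (j':ℕ)).count a := fun a => by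
    have := congrFun h a; simpa [mvec] using this
  apply Fin.ext
  rw [← hs j, ← hs j']
  exact Finset.sum_congr rfl fun a _ => hc a

lemma entry_char {d : ℕ} (ζ : Fin d → List (Fin d)) (t : Fin d → ℝ) (b c : Fin d) :
    specMat ζ t b c
      = ∑ j : Fin (ζ b).length, if (ζ b).get j = c then char (mvec (ζ b) j) t else 0 := by
  apply Finset.sum_congr rfl
  intro j _
  by_cases hj : (ζ b).get j = c
  · rw [if_pos hj, if_pos hj]
    unfold char mvec
    congr 1
    rw [listSum]
    push_cast
    ring
  · rw [if_neg hj, if_neg hj]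

lemma ite_char_integrable {d : ℕ} (Q : Prop) [Decidable Q] (m : Fin d → ℤ) :
    Integrable (fun t => if Q then char m t else 0) (haarCube d) := by
  by_cases hQ : Q
  · simpa [hQ] using char_integrable m
  · simp [hQ]

lemma entry_sq_int {d : ℕ} (ζ : Fin d → List (Fin d)) (b c : Fin d) :
    ∫ t, (‖specMat ζ t b c‖)^2 ∂(haarCube d) = ((ζ b).count c : ℝ) := by
  set w := ζ b with hw
  set G : (Fin d → ℝ) → ℂ := fun t =>
    ∑ j : Fin w.length, ∑ j' : Fin w.length,
      if (w.get j = c ∧ w.get j' = c) then char (mvec w j - mvec w j') t else 0 with hG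
  have hFG : ∀ t, (specMat ζ t b c) * (starRingEnd ℂ) (specMat ζ t b c) = G t := by
    intro t
    rw [entry_char, ← hw, map_sum, Finset.sum_mul_sum]
    apply Finset.sum_congr rfl; intro j _
    apply Finset.sum_congr rfl; intro j' _
    rw [apply_ite (starRingEnd ℂ), map_zero, char_conj]
    by_cases h1 : w.get j = c
    · by_cases h2 : w.get j' = c
      · rw [if_pos h1, if_pos h2, if_pos (⟨h1, h2⟩ : _ ∧ _), char_mul, sub_eq_add_neg]
      · rw [if_pos h1, if_neg h2, mul_zero, if_neg (fun h : _ ∧ _ => h2 h.2)]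
    · rw [if_neg h1, zero_mul, if_neg (fun h : _ ∧ _ => h1 h.1)]
  have hGint : Integrable G (haarCube d) :=
    integrable_finset_sum _ fun j _ => integrable_finset_sum _ fun j' _ =>
      ite_char_integrable _ _
  have hGval : ∫ t, G t ∂(haarCube d) = (w.count c : ℂ) := by
    rw [hG]
    rw [integral_finset_sum _ fun j _ => integrable_finset_sum _ fun j' _ =>
      ite_char_integrable _ _]
    have : ∀ j : Fin w.length,
        (∫ t, ∑ j' : Fin w.length,
          (if (w.get j = c ∧ w.get j' = c) then char (mvec w j - mvec w j') t else 0)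
          ∂(haarCube d))
        = if w.get j = c then (1:ℂ) else 0 := by
      intro j
      rw [integral_finset_sum _ fun j' _ => ite_char_integrable _ _]
      have hterm : ∀ j' : Fin w.length,
          (∫ t, (if (w.get j = c ∧ w.get j' = c) then char (mvec w j - mvec w j') t else 0)
            ∂(haarCube d))
          = if (w.get j = c ∧ w.get j' = c) then (if j = j' then (1:ℂ) else 0) else 0 := by
        intro j'
        by_cases hQ : (w.get j = c ∧ w.get j' = c)
        · have h₁ : (∫ t, (if (w.get j = c ∧ w.get j' = c)
              then char (mvec w j - mvec w j') t else 0) ∂(haarCube d))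
              = ∫ t, char (mvec w (j:ℕ) - mvec w (j':ℕ)) t ∂(haarCube d) :=
            integral_congr_ae (Filter.Eventually.of_forall fun t => if_pos hQ)
          rw [h₁, charInt, if_pos hQ]
          congr 1
          simp only [eq_iff_iff]
          constructor
          · intro h
            exact mvec_inj w j j' (sub_eq_zero.mp h)
          · intro h; subst h; simp
        · have h₁ : (∫ t, (if (w.get j = c ∧ w.get j' = c)
              then char (mvec w j - mvec w j') t else 0) ∂(haarCube d))
              = ∫ t, (0:ℂ) ∂(haarCube d) :=
            integral_congr_ae (Filter.Eventually.of_forall fun t => if_neg hQ)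
          rw [h₁, integral_zero, if_neg hQ]
      rw [Finset.sum_congr rfl fun j' _ => hterm j']
      rw [Finset.sum_eq_single j]
      · by_cases h1 : w.get j = c <;> simp [h1]
      · intro j' _ hj'
        by_cases hQ : (w.get j = c ∧ w.get j' = c) <;> simp [hQ, (Ne.symm hj')]
      · intro h; exact absurd (Finset.mem_univ j) h
    rw [Finset.sum_congr rfl fun j _ => this j, getIte]
  have habs : ∀ t, (‖specMat ζ t b c‖)^2
      = ((specMat ζ t b c) * (starRingEnd ℂ) (specMat ζ t b c)).re := by
    intro t
    rw [Complex.mul_conj, Complex.ofReal_re, Complex.sq_norm]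
  calc ∫ t, (‖specMat ζ t b c‖)^2 ∂(haarCube d)
      = ∫ t, (G t).re ∂(haarCube d) := by
        apply integral_congr_ae; filter_upwards with t; rw [habs, hFG]
    _ = (∫ t, G t ∂(haarCube d)).re := by
        rw [← RCLike.re_eq_complex_re, integral_re hGint, RCLike.re_eq_complex_re]
    _ = ((ζ b).count c : ℝ) := by rw [hGval, ← hw]; simp

lemma entry_cont {d : ℕ} (ζ : Fin d → List (Fin d)) (b c : Fin d) :
    Continuous (fun t => specMat ζ t b c) := by
  have h : (fun t => specMat ζ t b c)
      = fun t => ∑ j : Fin (ζ b).length,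
          if (ζ b).get j = c then char (mvec (ζ b) j) t else 0 :=
    funext fun t => entry_char ζ t b c
  rw [h]
  apply continuous_finset_sum
  intro j _
  by_cases hj : (ζ b).get j = c
  · have : (fun t => if (ζ b).get j = c then char (mvec (ζ b) j) t else 0)
        = char (mvec (ζ b) (j:ℕ)) := funext fun t => if_pos hj
    rw [this]; exact char_continuous _
  · have : (fun t : Fin d → ℝ => if (ζ b).get j = c then char (mvec (ζ b) j) t else 0)
        = fun _ => 0 := funext fun t => if_neg hj
    rw [this]; exact continuous_const

lemma entry_bound {d : ℕ} (ζ : Fin d → List (Fin d)) (t : Fin d → ℝ) (b c : Fin d) :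
    ‖specMat ζ t b c‖ ≤ ((ζ b).length : ℝ) := by
  rw [entry_char]
  calc ‖∑ j : Fin (ζ b).length,
        if (ζ b).get j = c then char (mvec (ζ b) j) t else 0‖
      ≤ ∑ j : Fin (ζ b).length,
        ‖if (ζ b).get j = c then char (mvec (ζ b) j) t else 0‖ := by
        exact norm_sum_le _ _
    _ ≤ ∑ _j : Fin (ζ b).length, (1:ℝ) := by
        apply Finset.sum_le_sum
        intro j _
        by_cases hj : (ζ b).get j = c
        · rw [if_pos hj, char_norm]
        · rw [if_neg hj]; simp
    _ = ((ζ b).length : ℝ) := by simp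

lemma entry_sq_integrable {d : ℕ} (ζ : Fin d → List (Fin d)) (b c : Fin d) :
    Integrable (fun t => (‖specMat ζ t b c‖)^2) (haarCube d) := by
  apply (integrable_const (((ζ b).length : ℝ)^2)).mono'
  · exact ((continuous_norm.comp (entry_cont ζ b c)).pow 2).aestronglyMeasurable
  · filter_upwards with t
    rw [Real.norm_of_nonneg (by positivity)]
    exact pow_le_pow_left₀ (norm_nonneg _) (entry_bound ζ t b c) 2

/-- the inequality `log x ≤ x/L - 1 + log L` -/
lemma log_le_aux {L x : ℝ} (hL : 0 < L) (hx : 0 < x) :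
    Real.log x ≤ x / L - 1 + Real.log L := by
  have h1 : Real.log (x / L) ≤ x / L - 1 := Real.log_le_sub_one_of_pos (div_pos hx hL)
  rw [Real.log_div hx.ne' hL.ne'] at h1
  linarith

lemma S_countable :
    Set.Countable {x : ℝ | 1 + Complex.exp (-(2 * ↑π * Complex.I) * (x:ℂ)) = 0} := by
  apply Set.Countable.mono _ (Set.countable_range (fun n : ℤ => (1:ℝ)/2 - n))
  intro x hx
  simp only [Set.mem_setOf_eq] at hx
  have h1 : Complex.exp (-(2 * ↑π * Complex.I) * (x:ℂ) + ↑π * Complex.I) = 1 := by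
    rw [Complex.exp_add, Complex.exp_pi_mul_I]
    have : Complex.exp (-(2 * ↑π * Complex.I) * (x:ℂ)) = -1 := by linear_combination hx
    rw [this]; ring
  obtain ⟨n, hn⟩ := Complex.exp_eq_one_iff.mp h1
  refine ⟨n, ?_⟩
  have him := congrArg Complex.im hn
  simp only [Complex.add_im, Complex.mul_im, Complex.neg_im, Complex.neg_re, Complex.mul_re,
    Complex.ofReal_re, Complex.ofReal_im, Complex.I_re, Complex.I_im,
    Complex.intCast_im, Complex.intCast_re, Complex.re_ofNat, Complex.im_ofNat] at him
  have hπ := Real.pi_pos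
  have hx2 : x = 1/2 - n := by nlinarith [him]
  rw [hx2]

/-- `∫_{𝕋^d} log‖𝓜_ζ(t)‖_F dm_d(t) ≤ (1/2)·log(Σ_{b,c} S_ζ(b,c))`. -/
theorem stmt2 {d : ℕ} (hd : 0 < d) (ζ : Fin d → List (Fin d))
    (hζ : ∀ b, ζ b ≠ []) :
    (∫ t, Real.log (frobNorm (specMat ζ t)) ∂(haarCube d)) ≤
      (1 / 2) * Real.log (∑ b, ∑ c, subMat ζ b c) := by
  classical
  set μ := haarCube d
  set fsq : (Fin d → ℝ) → ℝ := fun t => ∑ b, ∑ c, (‖specMat ζ t b c‖)^2 with hfsq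
  set N : ℕ := ∑ b, (ζ b).length with hN
  have hfsq_nonneg : ∀ t, 0 ≤ fsq t := fun t =>
    Finset.sum_nonneg fun b _ => Finset.sum_nonneg fun c _ => by positivity
  have hrow_int : ∀ b : Fin d,
      Integrable (fun t => ∑ c, (‖specMat ζ t b c‖)^2) μ :=
    fun b => integrable_finset_sum _ fun c _ => entry_sq_integrable ζ b c
  have hfsq_integrable : Integrable fsq μ :=
    integrable_finset_sum _ fun b _ => hrow_int b
  have hfsq_val : ∫ t, fsq t ∂μ = (N : ℝ) := by
    rw [hfsq]
    rw [integral_finset_sum _ fun b _ => hrow_int b]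
    have hb : ∀ b : Fin d,
        ∫ t, ∑ c, (‖specMat ζ t b c‖)^2 ∂μ = ((ζ b).length : ℝ) := by
      intro b
      rw [integral_finset_sum _ fun c _ => entry_sq_integrable ζ b c]
      rw [Finset.sum_congr rfl fun c _ => entry_sq_int ζ b c, ← Nat.cast_sum, sumCount]
    rw [Finset.sum_congr rfl fun b _ => hb b, hN, Nat.cast_sum]
  have hN1 : 1 ≤ N := by
    have : d ≤ N := by
      rw [hN]
      calc d = ∑ _b : Fin d, 1 := by simp
        _ ≤ ∑ b, (ζ b).length := Finset.sum_le_sum fun b _ =>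
            List.length_pos_iff.mpr (hζ b)
    omega
  have hNpos : (0:ℝ) < N := by exact_mod_cast hN1
  have hRHS : ∑ b, ∑ c, subMat ζ b c = (N : ℝ) := by
    unfold subMat
    rw [Finset.sum_comm, hN]
    push_cast
    apply Finset.sum_congr rfl
    intro c _
    rw [← Nat.cast_sum, sumCount]
  -- the a.e. Jensen-type bound
  have hae : ∀ᵐ t ∂μ, Real.log (fsq t) ≤ fsq t / N - 1 + Real.log N := by
    by_cases h3 : 3 ≤ N
    · apply Filter.Eventually.of_forall
      intro t
      rcases eq_or_lt_of_le (hfsq_nonneg t) with h0 | hpos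
      · rw [← h0, Real.log_zero]
        have h1 : (1:ℝ) ≤ Real.log N := by
          rw [Real.le_log_iff_exp_le hNpos]
          have hlt : Real.exp 1 < (N:ℝ) :=
            calc Real.exp 1 < 2.7182818286 := Real.exp_one_lt_d9
              _ ≤ (3:ℝ) := by norm_num
              _ ≤ (N:ℝ) := by exact_mod_cast h3
          exact hlt.le
        have : (0:ℝ) / N = 0 := by simp
        linarith
      · exact log_le_aux hNpos hpos
    · by_cases hall : ∀ b, (ζ b).length = 1
      · -- all words singletons: fsq ≥ 1 everywhere
        apply Filter.Eventually.of_forall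
        intro t
        have hb0 : (0:ℝ) < fsq t := by
          set b0 : Fin d := ⟨0, hd⟩
          obtain ⟨c0, hc0⟩ := List.length_eq_one_iff.mp (hall b0)
          have hone : specMat ζ t b0 c0 = 1 := by
            have hlen : (ζ b0).length = 1 := hall b0
            have hterm : ∀ x : Fin (ζ b0).length,
                (if (ζ b0).get x = c0 then Complex.exp (-(2 * Real.pi * Complex.I) *
                  ((((ζ b0).take (x:ℕ)).map t).sum : ℝ)) else 0) = 1 := by
              intro x
              have hx0 : (x : ℕ) = 0 := by have := x.2; omega
              have hget : (ζ b0).get x = c0 := by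
                have hall_mem : ∀ y ∈ ζ b0, y = c0 := by
                  intro y hy; rw [hc0] at hy; simpa using hy
                exact hall_mem _ (List.get_mem (ζ b0) x)
              rw [if_pos hget, hx0]
              simp
            calc specMat ζ t b0 c0 = ∑ x : Fin (ζ b0).length, (1:ℂ) :=
                  Finset.sum_congr rfl fun x _ => hterm x
              _ = 1 := by simp [hlen]
          have h1 : (1:ℝ) ≤ ∑ c, (‖specMat ζ t b0 c‖)^2 := by
            calc (1:ℝ) = (‖specMat ζ t b0 c0‖)^2 := by rw [hone]; simp
              _ ≤ _ := Finset.single_le_sum (f := fun c =>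
                    (‖specMat ζ t b0 c‖)^2)
                    (fun c _ => by positivity) (Finset.mem_univ c0)
          calc (0:ℝ) < 1 := one_pos
            _ ≤ ∑ c, (‖specMat ζ t b0 c‖)^2 := h1
            _ ≤ fsq t := Finset.single_le_sum (f := fun b =>
                  ∑ c, (‖specMat ζ t b c‖)^2)
                  (fun b _ => Finset.sum_nonneg fun c _ => by positivity)
                  (Finset.mem_univ b0)
        exact log_le_aux hNpos hb0
      · -- necessarily d = 1 and the word is [0,0]
        push_neg at h3
        obtain ⟨b1, hb1⟩ := not_forall.mp hall
        have hlen1 : 2 ≤ (ζ b1).length := by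
          have := List.length_pos_iff.mpr (hζ b1)
          omega
        have hsum : (ζ b1).length + (d - 1) ≤ N := by
          rw [hN, ← Finset.add_sum_erase _ _ (Finset.mem_univ b1)]
          have : (d-1) ≤ ∑ b ∈ Finset.univ.erase b1, (ζ b).length := by
            calc d - 1 = (Finset.univ.erase b1).card := by
                  rw [Finset.card_erase_of_mem (Finset.mem_univ b1)]; simp
              _ = ∑ _b ∈ Finset.univ.erase b1, 1 := by simp
              _ ≤ _ := Finset.sum_le_sum fun b _ => List.length_pos_iff.mpr (hζ b)
          omega
        have hd1 : d = 1 := by omega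
        subst hd1
        have hb10 : b1 = 0 := Subsingleton.elim _ _
        have hlen2 : (ζ 0).length = 2 := by
          have : N = (ζ 0).length := by
            rw [hN]
            simp
          omega
        obtain ⟨a, b', hab⟩ := List.length_eq_two.mp hlen2
        have ha : a = 0 := Subsingleton.elim _ _
        have hb' : b' = 0 := Subsingleton.elim _ _
        rw [ha, hb'] at hab
        have hentry : ∀ t : Fin 1 → ℝ, specMat ζ t 0 0
            = 1 + Complex.exp (-(2 * ↑π * Complex.I) * ((t 0 : ℝ):ℂ)) := by
          intro t
          have hcond : ∀ j : Fin (ζ 0).length, (ζ 0).get j = 0 :=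
            fun j => Subsingleton.elim _ _
          show (∑ j : Fin (ζ 0).length, if (ζ 0).get j = 0 then
              Complex.exp (-(2 * Real.pi * Complex.I) *
                ((((ζ 0).take (j : ℕ)).map t).sum : ℝ)) else 0) = _
          rw [Finset.sum_congr rfl (fun j _ => if_pos (hcond j))]
          rw [Fin.sum_univ_eq_sum_range (fun j => Complex.exp (-(2 * Real.pi * Complex.I) *
              ((((ζ 0).take j).map t).sum : ℝ))) ((ζ 0).length)]
          rw [hlen2, Finset.sum_range_succ, Finset.sum_range_one, hab]
          simp
        have hfsq1 : ∀ t : Fin 1 → ℝ, fsq t = (‖specMat ζ t 0 0‖)^2 := by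
          intro t
          rw [hfsq]
          simp [Fin.sum_univ_one]
        set S : Set ℝ := {x : ℝ | 1 + Complex.exp (-(2 * ↑π * Complex.I) * (x:ℂ)) = 0}
          with hS
        have hSm : MeasurableSet S := S_countable.measurableSet
        have hZ : μ {t : Fin 1 → ℝ | t 0 ∈ S} = 0 := by
          have hset : {t : Fin 1 → ℝ | t 0 ∈ S} = Set.pi Set.univ (fun _ => S) := by
            ext t
            simp only [Set.mem_setOf_eq, Set.mem_pi, Set.mem_univ, forall_true_left]
            constructor
            · intro h i
              have : i = 0 := Subsingleton.elim _ _
              rwa [this]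
            · intro h; exact h 0
          rw [hset]
          show haarCube 1 _ = 0
          rw [haarCube, Measure.pi_pi]
          rw [Fin.prod_univ_one]
          rw [Measure.restrict_apply hSm]
          exact measure_mono_null Set.inter_subset_left (S_countable.measure_zero _)
        have hae0 : ∀ᵐ t ∂μ, t 0 ∉ S := by
          rw [ae_iff]
          convert hZ using 2
          ext t
          simp
        filter_upwards [hae0] with t ht
        have hne : fsq t ≠ 0 := by
          rw [hfsq1]
          intro h
          apply ht
          have : specMat ζ t 0 0 = 0 := by
            have := pow_eq_zero_iff (n := 2) (by norm_num) |>.mp h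
            exact norm_eq_zero.mp this
          rw [hentry] at this
          exact this
        exact log_le_aux hNpos (lt_of_le_of_ne (hfsq_nonneg t) (Ne.symm hne))
  -- rewrite the integrand
  have hInd : ∀ t, Real.log (frobNorm (specMat ζ t)) = Real.log (fsq t) / 2 := by
    intro t
    rw [frobNorm, Real.log_sqrt (hfsq_nonneg t)]
  rw [integral_congr_ae (Filter.Eventually.of_forall hInd), hRHS]
  by_cases hInt : Integrable (fun t => Real.log (fsq t)) μ
  · rw [integral_div]
    have hhint : Integrable (fun t => fsq t / N - 1 + Real.log N) μ :=
      ((hfsq_integrable.div_const _).sub (integrable_const 1)).add (integrable_const _)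
    have hle : ∫ t, Real.log (fsq t) ∂μ ≤ ∫ t, (fsq t / N - 1 + Real.log N) ∂μ :=
      integral_mono_ae hInt hhint hae
    have hval : ∫ t, (fsq t / N - 1 + Real.log N) ∂μ = Real.log N := by
      have hrw : (fun t => fsq t / N - 1 + Real.log N)
          = fun t => fsq t / N + (Real.log N - 1) := funext fun t => by ring
      rw [show (∫ t, (fsq t / N - 1 + Real.log N) ∂μ)
          = ∫ t, (fsq t / N + (Real.log N - 1)) ∂μ from by rw [hrw]]
      rw [integral_add (hfsq_integrable.div_const _) (integrable_const _),
        integral_div, hfsq_val, integral_const]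
      simp [div_self hNpos.ne', measure_univ]
    rw [hval] at hle
    linarith
  · have hInt2 : ¬ Integrable (fun t => Real.log (fsq t) / 2) μ := by
      intro h
      apply hInt
      have := h.const_mul 2
      simpa [mul_div_cancel₀] using this
    rw [integral_undef hInt2]
    have := Real.log_nonneg (by exact_mod_cast hN1 : (1:ℝ) ≤ (N:ℝ))
    positivity
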